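/- The set of canonical partial term graphs over a signature Σ, partially ordered by the rigid partial order ≤⊥r, forms a complete semilattice: it is a cpo (with least element the one-node term graph ⊥) in which every non-empty subset has a greatest lower bound. -/

import Mathlib

set_option autoImplicit false

namespace TGR

/-- A signature: a type of symbols, each with a finite arity. -/
structure Signature where
  Sym : Type
  ar : Sym → ℕ

/-- The signature `Σ_⊥`: `Σ` extended by a fresh nullary symbol `⊥` (here `none`). -/
def Signature.bot (S : Signature) : Signature where
  Sym := Option S.Sym
  ar := fun o => match o with
    | none => 0
    | some f => S.ar f

/-- A rooted graph over a signature `S` with nodes `N`: a labelling, a successor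
function respecting arities, and a root node. -/
structure TermGraph (S : Signature) (N : Type) where
  lab : N → S.Sym
  suc : (n : N) → Fin (S.ar (lab n)) → N
  root : N

namespace TermGraph

variable {S : Signature} {N M K : Type}

/-- `g.IsPos π n`: `π` is a position (path of successor indices from the root) of node `n`. -/
inductive IsPos (g : TermGraph S N) : List ℕ → N → Prop
  | root : IsPos g [] g.root
  | step {π : List ℕ} {n : N} (h : IsPos g π n) (i : Fin (S.ar (g.lab n))) :
      IsPos g (π ++ [(i : ℕ)]) (g.suc n i)

/-- All nodes are reachable from the root. -/
def Reachable (g : TermGraph S N) : Prop :=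
  ∀ n : N, ∃ π : List ℕ, g.IsPos π n

/-- The set of positions of `g`. -/
def pos (g : TermGraph S N) : Set (List ℕ) :=
  {π | ∃ n : N, g.IsPos π n}

/-- The set of positions of node `n` in `g`. -/
def nodePos (g : TermGraph S N) (n : N) : Set (List ℕ) :=
  {π | g.IsPos π n}

/-- `π ∼_g π'`: `π` and `π'` are positions of the same node. -/
def Aliases (g : TermGraph S N) (π π' : List ℕ) : Prop :=
  ∃ n : N, g.IsPos π n ∧ g.IsPos π' n

/-- A position is acyclic if it passes no node twice. -/
def IsAcyclicPos (g : TermGraph S N) (π : List ℕ) : Prop :=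
  ∀ (π₁ π₂ : List ℕ) (n : N), π₁ <+: π₂ → π₂ <+: π →
    g.IsPos π₁ n → g.IsPos π₂ n → π₁ = π₂

/-- The set of acyclic positions of node `n` in `g`. -/
def nodePosAcy (g : TermGraph S N) (n : N) : Set (List ℕ) :=
  {π | g.IsPos π n ∧ g.IsAcyclicPos π}

/-- The set of acyclic positions of `g`. -/
def posAcy (g : TermGraph S N) : Set (List ℕ) :=
  {π | (∃ n : N, g.IsPos π n) ∧ g.IsAcyclicPos π}

/-- The depth of a node: the minimal length of its positions. -/
noncomputable def depth (g : TermGraph S N) (n : N) : ℕ :=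
  sInf {k : ℕ | ∃ π : List ℕ, g.IsPos π n ∧ π.length = k}

open Classical in
/-- The (unique) node at a position. -/
noncomputable def nodeAt (g : TermGraph S N) (π : List ℕ) : N :=
  if h : ∃ n : N, g.IsPos π n then h.choose else g.root

/-- The label `g(π)` at a position. -/
noncomputable def labAt (g : TermGraph S N) (π : List ℕ) : S.Sym :=
  g.lab (g.nodeAt π)

/-- `Δ`-homomorphism: root, labelling and successor conditions, the latter two
suspended on `Δ`-labelled nodes. -/
structure IsDHom (Δ : Set S.Sym) (g : TermGraph S N) (h : TermGraph S M)
    (φ : N → M) : Prop where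
  root_eq : φ g.root = h.root
  lab_eq : ∀ n : N, g.lab n ∉ Δ → h.lab (φ n) = g.lab n
  suc_eq : ∀ n : N, g.lab n ∉ Δ → ∀ (i : ℕ) (hi : i < S.ar (g.lab n))
      (hi' : i < S.ar (h.lab (φ n))),
      φ (g.suc n ⟨i, hi⟩) = h.suc (φ n) ⟨i, hi'⟩

/-- Rigidity: `Pa_g(n) = Pa_h(φ n)` for all non-`Δ`-labelled nodes `n`. -/
def IsRigid (Δ : Set S.Sym) (g : TermGraph S N) (h : TermGraph S M)
    (φ : N → M) : Prop :=
  ∀ n : N, g.lab n ∉ Δ → g.nodePosAcy n = h.nodePosAcy (φ n)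

/-- Rigid `Δ`-homomorphism. -/
def IsRigidDHom (Δ : Set S.Sym) (g : TermGraph S N) (h : TermGraph S M)
    (φ : N → M) : Prop :=
  IsDHom Δ g h φ ∧ IsRigid Δ g h φ

/-- Isomorphism of term graphs: a homomorphism with an inverse homomorphism. -/
def Iso (g : TermGraph S N) (h : TermGraph S M) : Prop :=
  ∃ (φ : N → M) (ψ : M → N), IsDHom ∅ g h φ ∧ IsDHom ∅ h g ψ ∧
    (∀ n : N, ψ (φ n) = n) ∧ (∀ m : M, φ (ψ m) = m)

/-- A partial term graph (over `Σ_⊥`) is total if no node is labelled `⊥`. -/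
def Total (g : TermGraph S.bot N) : Prop := ∀ n : N, g.lab n ≠ none

/-- Rigid `⊥`-homomorphism between partial term graphs. -/
def IsRigidBotHom (g : TermGraph S.bot N) (h : TermGraph S.bot M)
    (φ : N → M) : Prop :=
  IsRigidDHom ({none} : Set (Option S.Sym)) g h φ

/-- The `⊥`-depth of a partial term graph: the minimal depth of a `⊥`-labelled
node, `ω` (`⊤`) if there is none. -/
noncomputable def botDepth (g : TermGraph S.bot N) : ℕ∞ :=
  sInf {d : ℕ∞ | ∃ n : N, g.lab n = none ∧ (g.depth n : ℕ∞) = d}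

/-- `m` is an acyclic predecessor of `n`: some acyclic position `π ++ [i]` of `n`
has `π` a position of `m`. -/
def acyPred (g : TermGraph S N) (n : N) : Set N :=
  {m | ∃ (π : List ℕ) (i : ℕ), (π ++ [i]) ∈ g.nodePosAcy n ∧ g.IsPos π m}

/-- Retained nodes of the truncation at depth `d`: the least set of nodes
containing all nodes of depth `< d` and closed under acyclic predecessors. -/
inductive Retained (g : TermGraph S N) (d : ℕ) : N → Prop
  | shallow {n : N} : g.depth n < d → Retained g d n
  | pred {n m : N} : Retained g d n → m ∈ g.acyPred n → Retained g d m

theorem not_retained_zero {g : TermGraph S N} (n : N) : ¬ g.Retained 0 n := by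
  intro h
  induction h with
  | shallow hd => exact Nat.not_lt_zero _ hd
  | pred _ _ ih => exact ih

/-- Fringe nodes of the truncation at depth `d` (a pair `(n, i)` stands for the
fresh node `n^i`); at depth `0` the fringe is just (a copy of) the root. -/
def IsFringe (g : TermGraph S.bot N) (d : ℕ) (p : N × ℕ) : Prop :=
  if d = 0 then p = (g.root, 0)
  else g.Retained d p.1 ∧ ∃ h : p.2 < S.bot.ar (g.lab p.1),
    (¬ g.Retained d (g.suc p.1 ⟨p.2, h⟩) ∨
      (d - 1 ≤ g.depth p.1 ∧ p.1 ∉ g.acyPred (g.suc p.1 ⟨p.2, h⟩)))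

/-- The node set of the rigid truncation: retained nodes plus fringe nodes. -/
def TNode (g : TermGraph S.bot N) (d : ℕ) : Type :=
  {x : N ⊕ (N × ℕ) // Sum.elim (g.Retained d) (g.IsFringe d) x}

def truncLab (g : TermGraph S.bot N) (d : ℕ) (x : TNode g d) : S.bot.Sym :=
  Sum.elim (fun n => g.lab n) (fun _ => none) x.1

open Classical in
noncomputable def truncSuc (g : TermGraph S.bot N) (d : ℕ) :
    (x : TNode g d) → Fin (S.bot.ar (truncLab g d x)) → TNode g d
  | ⟨Sum.inl n, hn⟩ => fun i =>
      if hf : g.IsFringe d (n, (i : ℕ)) then ⟨Sum.inr (n, (i : ℕ)), hf⟩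
      else
        ⟨Sum.inl (g.suc n ⟨(i : ℕ), i.isLt⟩), by
          show g.Retained d (g.suc n ⟨(i : ℕ), i.isLt⟩)
          rcases Nat.eq_zero_or_pos d with hd | hd
          · subst hd
            exact ((not_retained_zero n) hn).elim
          · by_contra hc
            apply hf
            show g.IsFringe d (n, (i : ℕ))
            unfold IsFringe
            rw [if_neg (Nat.pos_iff_ne_zero.mp hd)]
            exact ⟨hn, i.isLt, Or.inl hc⟩⟩
  | ⟨Sum.inr p, hp⟩ => fun i => absurd i.isLt (Nat.not_lt_zero _)

noncomputable def truncRoot (g : TermGraph S.bot N) (d : ℕ) : TNode g d :=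
  if hd : d = 0 then
    ⟨Sum.inr (g.root, 0), by
      subst hd
      show g.IsFringe 0 (g.root, 0)
      simp [IsFringe]⟩
  else
    ⟨Sum.inl g.root, by
      show g.Retained d g.root
      exact Retained.shallow (lt_of_le_of_lt
        (Nat.sInf_le ⟨[], IsPos.root, rfl⟩) (Nat.pos_of_ne_zero hd))⟩

/-- The rigid truncation `g†d` of a partial term graph at finite depth `d`. -/
noncomputable def trunc (g : TermGraph S.bot N) (d : ℕ) :
    TermGraph S.bot (TNode g d) where
  lab := truncLab g d
  suc := truncSuc g d
  root := truncRoot g d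

end TermGraph

/-- A canonical term graph: a term graph whose nodes are sets of positions,
each node being exactly its set of positions, with all nodes reachable. -/
structure CTG (S : Signature) where
  nodes : Set (Set (List ℕ))
  tg : TermGraph S ↥nodes
  reach : tg.Reachable
  canon : ∀ n : ↥nodes, (n : Set (List ℕ)) = tg.nodePos n

namespace CTG

variable {S : Signature}

def pos (g : CTG S) : Set (List ℕ) := g.tg.pos
def Aliases (g : CTG S) : List ℕ → List ℕ → Prop := g.tg.Aliases
def posAcy (g : CTG S) : Set (List ℕ) := g.tg.posAcy
noncomputable def labAt (g : CTG S) : List ℕ → S.Sym := g.tg.labAt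

/-- A canonical partial term graph is total if it has no `⊥`-labelled node. -/
def Total (g : CTG S.bot) : Prop := g.tg.Total

/-- The rigid partial order `g ≤⊥r h`: there is a rigid `⊥`-homomorphism
from `g` to `h`. -/
def LeR (g h : CTG S.bot) : Prop :=
  ∃ φ, TermGraph.IsRigidBotHom g.tg h.tg φ

noncomputable def botDepth (g : CTG S.bot) : ℕ∞ := g.tg.botDepth

/-- `TruncIso g h d`: the rigid truncations of `g` and `h` at depth `d ≤ ω`
are isomorphic (`g†ω = g`). -/
def TruncIso {N M : Type} (g : TermGraph S.bot N) (h : TermGraph S.bot M)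
    (d : ℕ∞) : Prop :=
  (d = ⊤ → TermGraph.Iso g h) ∧
  ∀ k : ℕ, d = (k : ℕ∞) → TermGraph.Iso (g.trunc k) (h.trunc k)

/-- The rigid similarity `sim†(g,h)`: the maximal `d ≤ ω` such that
`g†d ≅ h†d`. -/
noncomputable def simr (g h : CTG S.bot) : ℕ∞ :=
  sSup {d : ℕ∞ | TruncIso g.tg h.tg d}

open Classical in
/-- The rigid distance `d†(g,h) = 2^{-sim†(g,h)}` (with `2^{-ω} = 0`). -/
noncomputable def rdist (g h : CTG S.bot) : ℝ :=
  if simr g h = ⊤ then 0 else (1 / 2 : ℝ) ^ (simr g h).toNat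

def IsUB (A : Set (CTG S.bot)) (u : CTG S.bot) : Prop := ∀ g ∈ A, LeR g u

def IsLubR (A : Set (CTG S.bot)) (u : CTG S.bot) : Prop :=
  IsUB A u ∧ ∀ v, IsUB A v → LeR u v

def IsLB (A : Set (CTG S.bot)) (l : CTG S.bot) : Prop := ∀ g ∈ A, LeR l g

def IsGlbR (A : Set (CTG S.bot)) (l : CTG S.bot) : Prop :=
  IsLB A l ∧ ∀ m, IsLB A m → LeR m l

/-- A directed set: non-empty and every two elements have an upper bound inside. -/
def DirectedR (A : Set (CTG S.bot)) : Prop :=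
  A.Nonempty ∧ ∀ g ∈ A, ∀ h ∈ A, ∃ u ∈ A, LeR g u ∧ LeR h u

/-- `L` is the limit inferior `⨆_{β<α} ⨅_{β≤ι<α} f ι` of the ordinal-indexed
sequence `(f ι)_{ι<α}` in the rigid partial order. -/
def IsLiminfR (α : Ordinal.{0}) (f : Ordinal.{0} → CTG S.bot) (L : CTG S.bot) : Prop :=
  ∃ inf : Ordinal.{0} → CTG S.bot,
    (∀ β < α, IsGlbR {g | ∃ ι, β ≤ ι ∧ ι < α ∧ g = f ι} (inf β)) ∧
    IsLubR {g | ∃ β < α, g = inf β} L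

/-- Cauchy condition for an ordinal-indexed sequence w.r.t. the rigid distance. -/
def OrdCauchy (α : Ordinal.{0}) (f : Ordinal.{0} → CTG S.bot) : Prop :=
  ∀ ε : ℝ, 0 < ε → ∃ β < α, ∀ ι ι' : Ordinal.{0},
    β < ι → ι < ι' → ι' < α → rdist (f ι) (f ι') < ε

/-- Convergence of an ordinal-indexed sequence to `g` w.r.t. the rigid distance. -/
def OrdTendsto (α : Ordinal.{0}) (f : Ordinal.{0} → CTG S.bot) (g : CTG S.bot) : Prop :=
  ∀ ε : ℝ, 0 < ε → ∃ β < α, ∀ ι : Ordinal.{0}, β < ι → ι < α → rdist (f ι) g < ε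

/-- `u` is the unravelling of `g`: the term tree with the same positions and
labels as `g` and trivial aliasing. -/
def IsUnravelling (g u : CTG S) : Prop :=
  u.pos = g.pos ∧ (∀ π ∈ g.pos, u.labAt π = g.labAt π) ∧
  (∀ π π' : List ℕ, u.Aliases π π' ↔ (π ∈ g.pos ∧ π = π'))

end CTG

/-- A labelled quotient tree over a signature `S`. -/
structure LQT (S : Signature) where
  P : Set (List ℕ)
  nonempty : P.Nonempty
  l : List ℕ → S.Sym
  rel : List ℕ → List ℕ → Prop
  rel_refl : ∀ π ∈ P, rel π π
  rel_symm : ∀ π π' : List ℕ, rel π π' → rel π' π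
  rel_trans : ∀ π π' π'' : List ℕ, rel π π' → rel π' π'' → rel π π''
  rel_mem : ∀ π π' : List ℕ, rel π π' → π ∈ P ∧ π' ∈ P
  reach_mem : ∀ (π : List ℕ) (i : ℕ), π ++ [i] ∈ P → π ∈ P
  reach_ar : ∀ (π : List ℕ) (i : ℕ), π ++ [i] ∈ P → i < S.ar (l π)
  congr_lab : ∀ π π' : List ℕ, rel π π' → l π = l π'
  congr_suc : ∀ (π π' : List ℕ) (i : ℕ), rel π π' → i < S.ar (l π) →
    rel (π ++ [i]) (π' ++ [i])

end TGR

namespace TGR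

namespace TermGraph

variable {S : Signature} {N M : Type}

theorem isPos_nil {g : TermGraph S N} {n : N} (h : g.IsPos [] n) : n = g.root := by
  generalize hπ : ([] : List ℕ) = ρ at h
  cases h with
  | root => rfl
  | step h i => exact absurd hπ.symm (by simp)

theorem isPos_snoc {g : TermGraph S N} {π : List ℕ} {i : ℕ} {n : N}
    (h : g.IsPos (π ++ [i]) n) :
    ∃ (m : N) (hi : i < S.ar (g.lab m)), g.IsPos π m ∧ n = g.suc m ⟨i, hi⟩ := by
  generalize hπ : π ++ [i] = ρ at h
  cases h with
  | root => exact absurd hπ (by simp)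
  | @step π' m h' j =>
    have : π = π' ∧ i = (j : ℕ) := by
      have := hπ
      rw [← List.concat_eq_append, ← List.concat_eq_append, List.concat_inj] at this
      exact this
    obtain ⟨rfl, rfl⟩ := this
    exact ⟨m, j.isLt, h', rfl⟩

theorem isPos_unique {g : TermGraph S N} {π : List ℕ} {n m : N}
    (h1 : g.IsPos π n) (h2 : g.IsPos π m) : n = m := by
  induction π using List.reverseRecOn generalizing n m with
  | nil => rw [isPos_nil h1, isPos_nil h2]
  | append_singleton π i ih =>
    obtain ⟨a, ha, hpa, rfl⟩ := isPos_snoc h1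
    obtain ⟨b, hb, hpb, rfl⟩ := isPos_snoc h2
    cases ih hpa hpb
    rfl

theorem isPos_prefix {g : TermGraph S N} {π ρ : List ℕ} {n : N}
    (h : g.IsPos π n) (hρ : ρ <+: π) : ∃ m, g.IsPos ρ m := by
  induction h generalizing ρ with
  | root => rw [List.prefix_nil.mp hρ]; exact ⟨g.root, IsPos.root⟩
  | @step π' m h i ih =>
    rcases List.prefix_concat_iff.mp hρ with rfl | hρ'
    · exact ⟨_, h.step i⟩
    · exact ih hρ'

end TermGraph
namespace TermGraph

theorem IsDHom.isPos {S : Signature} {N M : Type} {g : TermGraph S.bot N}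
    {h : TermGraph S.bot M} {φ : N → M}
    (hφ : IsDHom ({none} : Set (Option S.Sym)) g h φ)
    {π : List ℕ} {n : N} (hp : g.IsPos π n) : h.IsPos π (φ n) := by
  induction hp with
  | root => rw [hφ.root_eq]; exact IsPos.root
  | @step π m hm i ih =>
    have hmem : g.lab m ∉ ({none} : Set (Option S.Sym)) := by
      intro hc
      replace hc : g.lab m = none := hc
      have h0 := i.isLt
      have h1 : S.bot.ar (g.lab m) = 0 := by rw [hc]; rfl
      omega
    have hi' : (i : ℕ) < S.bot.ar (h.lab (φ m)) := by
      rw [hφ.lab_eq m hmem]; exact i.isLt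
    have hsuc := hφ.suc_eq m hmem i i.isLt hi'
    have hfin : (⟨(i : ℕ), i.isLt⟩ : Fin (S.bot.ar (g.lab m))) = i := rfl
    rw [hfin] at hsuc
    rw [hsuc]
    exact ih.step ⟨(i : ℕ), hi'⟩

end TermGraph

namespace CTG

variable {S : Signature}

/-- The label found at a position, as a membership statement. -/
def MemLab (g : CTG S) (π : List ℕ) (v : S.Sym) : Prop :=
  ∃ n, g.tg.IsPos π n ∧ g.tg.lab n = v

theorem aliases_refl {g : CTG S} {π : List ℕ} {n : ↥g.nodes}
    (h : g.tg.IsPos π n) : g.Aliases π π := ⟨n, h, h⟩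

theorem aliases_symm {g : CTG S} {π π' : List ℕ} (h : g.Aliases π π') :
    g.Aliases π' π := let ⟨n, h1, h2⟩ := h; ⟨n, h2, h1⟩

theorem aliases_trans {g : CTG S} {π π' π'' : List ℕ} (h : g.Aliases π π')
    (h' : g.Aliases π' π'') : g.Aliases π π'' := by
  obtain ⟨n, h1, h2⟩ := h
  obtain ⟨m, h3, h4⟩ := h'
  cases TermGraph.isPos_unique h2 h3
  exact ⟨n, h1, h4⟩

theorem aliases_isPos {g : CTG S} {π π' : List ℕ} {n : ↥g.nodes}
    (h : g.Aliases π π') (hn : g.tg.IsPos π n) : g.tg.IsPos π' n := by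
  obtain ⟨m, h1, h2⟩ := h
  cases TermGraph.isPos_unique hn h1
  exact h2

theorem aliases_step {g : CTG S} {π π' : List ℕ} (h : g.Aliases π π')
    {n : ↥g.nodes} (hn : g.tg.IsPos π n) {i : ℕ} (hi : i < S.ar (g.tg.lab n)) :
    g.Aliases (π ++ [i]) (π' ++ [i]) :=
  ⟨g.tg.suc n ⟨i, hi⟩, hn.step ⟨i, hi⟩, (aliases_isPos h hn).step ⟨i, hi⟩⟩

/-- Position-level characterisation of the rigid partial order. -/
structure PosLe (g h : CTG S.bot) : Prop where
  al : ∀ π π', g.Aliases π π' → h.Aliases π π'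
  lab : ∀ π f, g.MemLab π (some f) → h.MemLab π (some f)
  rig : ∀ π f, g.MemLab π (some f) → ∀ π',
      ((g.Aliases π' π ∧ g.tg.IsAcyclicPos π') ↔ (h.Aliases π' π ∧ h.tg.IsAcyclicPos π'))

theorem PosLe.trans {g h k : CTG S.bot} (a : PosLe g h) (b : PosLe h k) :
    PosLe g k where
  al := fun π π' hal => b.al π π' (a.al π π' hal)
  lab := fun π f hf => b.lab π f (a.lab π f hf)
  rig := fun π f hf π' => (a.rig π f hf π').trans (b.rig π f (a.lab π f hf) π')

theorem LeR.posLe {g h : CTG S.bot} (hle : g.LeR h) : PosLe g h := by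
  obtain ⟨φ, hom, hrig⟩ := hle
  refine ⟨?_, ?_, ?_⟩
  · rintro π π' ⟨n, h1, h2⟩
    exact ⟨φ n, hom.isPos h1, hom.isPos h2⟩
  · rintro π f ⟨n, h1, h2⟩
    refine ⟨φ n, hom.isPos h1, ?_⟩
    rw [hom.lab_eq n (by rw [h2]; exact fun hc => Option.some_ne_none f hc)]; exact h2
  · rintro π f ⟨n, h1, h2⟩ π'
    have hmem : g.tg.lab n ∉ ({none} : Set (Option S.Sym)) := by
      rw [h2]; exact fun hc => Option.some_ne_none f hc
    have heq := hrig n hmem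
    have hmemset : ∀ x ∈ g.tg.nodePosAcy n, x ∈ h.tg.nodePosAcy (φ n) := by
      rw [heq]; exact fun x hx => hx
    have hmemset' : ∀ x ∈ h.tg.nodePosAcy (φ n), x ∈ g.tg.nodePosAcy n := by
      rw [heq]; exact fun x hx => hx
    constructor
    · rintro ⟨hal, hacy⟩
      have hx : π' ∈ g.tg.nodePosAcy n := ⟨aliases_isPos (aliases_symm hal) h1, hacy⟩
      obtain ⟨hq1, hq2⟩ := hmemset π' hx
      exact ⟨⟨φ n, hq1, hom.isPos h1⟩, hq2⟩
    · rintro ⟨hal, hacy⟩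
      have hx : π' ∈ h.tg.nodePosAcy (φ n) :=
        ⟨aliases_isPos (aliases_symm hal) (hom.isPos h1), hacy⟩
      obtain ⟨hq1, hq2⟩ := hmemset' π' hx
      exact ⟨⟨n, hq1, h1⟩, hq2⟩

theorem PosLe.leR {g h : CTG S.bot} (hp : PosLe g h) : g.LeR h := by
  classical
  choose pos_ hpos using g.reach
  have him : ∀ n : ↥g.nodes, ∃ m, h.tg.IsPos (pos_ n) m := by
    intro n
    obtain ⟨m, h1, _⟩ := hp.al _ _ (aliases_refl (hpos n))
    exact ⟨m, h1⟩
  choose φ hφ using him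
  have key : ∀ (n : ↥g.nodes) (π : List ℕ), g.tg.IsPos π n → h.tg.IsPos π (φ n) := by
    intro n π hπ
    obtain ⟨m, h1, h2⟩ := hp.al _ _ (⟨n, hπ, hpos n⟩ : g.Aliases π (pos_ n))
    cases TermGraph.isPos_unique h2 (hφ n)
    exact h1
  have labeq : ∀ n : ↥g.nodes, g.tg.lab n ∉ ({none} : Set (Option S.Sym)) →
      h.tg.lab (φ n) = g.tg.lab n := by
    intro n hn
    replace hn : ¬ g.tg.lab n = none := hn
    obtain ⟨f, hf⟩ : ∃ f, g.tg.lab n = some f := Option.ne_none_iff_exists'.mp hn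
    obtain ⟨m, q1, q2⟩ := hp.lab _ f ⟨n, hpos n, hf⟩
    cases TermGraph.isPos_unique q1 (hφ n)
    rw [q2, hf]
  refine ⟨φ, ⟨⟨?_, labeq, ?_⟩, ?_⟩⟩
  · have h1 : h.tg.IsPos [] (φ g.tg.root) := key _ [] TermGraph.IsPos.root
    exact TermGraph.isPos_nil h1
  · intro n hn i hi hi'
    have p1 : h.tg.IsPos (pos_ n ++ [i]) (φ (g.tg.suc n ⟨i, hi⟩)) :=
      key _ _ ((hpos n).step ⟨i, hi⟩)
    have p2 : h.tg.IsPos (pos_ n ++ [i]) (h.tg.suc (φ n) ⟨i, hi'⟩) :=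
      (key _ _ (hpos n)).step ⟨i, hi'⟩
    exact TermGraph.isPos_unique p1 p2
  · intro n hn
    replace hn : ¬ g.tg.lab n = none := hn
    obtain ⟨f, hf⟩ : ∃ f, g.tg.lab n = some f := Option.ne_none_iff_exists'.mp hn
    have hr := hp.rig _ f ⟨n, hpos n, hf⟩
    ext π'
    constructor
    · rintro ⟨q1, q2⟩
      obtain ⟨⟨m, r1, r2⟩, r3⟩ := (hr π').mp ⟨⟨n, q1, hpos n⟩, q2⟩
      cases TermGraph.isPos_unique r2 (key _ _ (hpos n))
      exact ⟨r1, r3⟩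
    · rintro ⟨q1, q2⟩
      obtain ⟨⟨m, r1, r2⟩, r3⟩ := (hr π').mpr ⟨⟨φ n, q1, key _ _ (hpos n)⟩, q2⟩
      cases TermGraph.isPos_unique r2 (hpos n)
      exact ⟨r1, r3⟩

theorem leR_refl (g : CTG S.bot) : g.LeR g :=
  ⟨id, ⟨⟨rfl, fun _ _ => rfl, fun n _ i hi hi' => rfl⟩, fun _ _ => rfl⟩⟩

theorem leR_trans {g h k : CTG S.bot} (a : g.LeR h) (b : h.LeR k) : g.LeR k :=
  (a.posLe.trans b.posLe).leR

end CTG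
namespace CTG

variable {S : Signature}

theorem ctg_ext {g h : CTG S} (E : g.nodes = h.nodes)
    (Hlab : ∀ (n : ↥g.nodes) (m : ↥h.nodes), (n : Set (List ℕ)) = ↑m →
      g.tg.lab n = h.tg.lab m)
    (Hsuc : ∀ (n : ↥g.nodes) (m : ↥h.nodes), (n : Set (List ℕ)) = ↑m →
      ∀ (i : ℕ) (hi : i < S.ar (g.tg.lab n)) (hi' : i < S.ar (h.tg.lab m)),
      (↑(g.tg.suc n ⟨i, hi⟩) : Set (List ℕ)) = ↑(h.tg.suc m ⟨i, hi'⟩))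
    (Hroot : (↑g.tg.root : Set (List ℕ)) = ↑h.tg.root) : g = h := by
  obtain ⟨N1, t1, r1, c1⟩ := g
  obtain ⟨N2, t2, r2, c2⟩ := h
  dsimp only at E Hlab Hsuc Hroot
  subst E
  have ht : t1 = t2 := by
    obtain ⟨lab1, suc1, root1⟩ := t1
    obtain ⟨lab2, suc2, root2⟩ := t2
    dsimp only at Hlab Hsuc Hroot
    have hl : lab1 = lab2 := funext fun n => Hlab n n rfl
    subst hl
    have hs : suc1 = suc2 := by
      funext n i
      have := Hsuc n n rfl (i : ℕ) i.isLt i.isLt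
      have hfin : (⟨(i : ℕ), i.isLt⟩ : Fin (S.ar (lab1 n))) = i := rfl
      rw [hfin] at this
      exact Subtype.coe_injective this
    subst hs
    have hr : root1 = root2 := Subtype.coe_injective Hroot
    subst hr
    rfl
  subst ht
  rfl

theorem leR_antisymm {g h : CTG S.bot} (a : g.LeR h) (b : h.LeR g) : g = h := by
  obtain ⟨φ, homφ, rigφ⟩ := a
  obtain ⟨ψ, homψ, rigψ⟩ := b
  have memPos : ∀ (k : CTG S.bot) (n : ↥k.nodes) (π : List ℕ),
      π ∈ (n : Set (List ℕ)) ↔ k.tg.IsPos π n := by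
    intro k n π
    rw [k.canon n]
    exact Iff.rfl
  have subφ : ∀ n : ↥g.nodes, (n : Set (List ℕ)) ⊆ ↑(φ n) := by
    intro n π hπ
    exact (memPos h (φ n) π).mpr (homφ.isPos ((memPos g n π).mp hπ))
  have subψ : ∀ m : ↥h.nodes, (m : Set (List ℕ)) ⊆ ↑(ψ m) := by
    intro m π hπ
    exact (memPos g (ψ m) π).mpr (homψ.isPos ((memPos h m π).mp hπ))
  have ψφ : ∀ n : ↥g.nodes, ψ (φ n) = n := by
    intro n
    obtain ⟨π, hπ⟩ := g.reach n
    have h2 : π ∈ (↑(ψ (φ n)) : Set (List ℕ)) := subψ _ (subφ _ ((memPos g n π).mpr hπ))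
    exact TermGraph.isPos_unique ((memPos g (ψ (φ n)) π).mp h2) hπ
  have φψ : ∀ m : ↥h.nodes, φ (ψ m) = m := by
    intro m
    obtain ⟨π, hπ⟩ := h.reach m
    have h2 : π ∈ (↑(φ (ψ m)) : Set (List ℕ)) := subφ _ (subψ _ ((memPos h m π).mpr hπ))
    exact TermGraph.isPos_unique ((memPos h (φ (ψ m)) π).mp h2) hπ
  have cφ : ∀ n : ↥g.nodes, (↑(φ n) : Set (List ℕ)) = ↑n := by
    intro n
    refine Set.Subset.antisymm ?_ (subφ n)
    have := subψ (φ n)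
    rw [ψφ n] at this
    exact this
  have cψ : ∀ m : ↥h.nodes, (↑(ψ m) : Set (List ℕ)) = ↑m := by
    intro m
    refine Set.Subset.antisymm ?_ (subψ m)
    have := subφ (ψ m)
    rw [φψ m] at this
    exact this
  have E : g.nodes = h.nodes := by
    ext s
    constructor
    · intro hs
      have : (↑(φ ⟨s, hs⟩) : Set (List ℕ)) = s := cφ ⟨s, hs⟩
      rw [← this]
      exact (φ ⟨s, hs⟩).2
    · intro hs
      have : (↑(ψ ⟨s, hs⟩) : Set (List ℕ)) = s := cψ ⟨s, hs⟩
      rw [← this]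
      exact (ψ ⟨s, hs⟩).2
  refine ctg_ext E ?_ ?_ ?_
  · intro n m hnm
    have hm : φ n = m := by
      apply Subtype.coe_injective
      show (↑(φ n) : Set (List ℕ)) = ↑m
      rw [cφ n, hnm]
    by_cases hn : g.tg.lab n = none
    · rw [hn]
      by_contra hc
      have hmem : h.tg.lab m ∉ ({none} : Set (Option S.Sym)) := by
        simpa using fun hx => hc hx.symm
      have := homψ.lab_eq m hmem
      have hψm : ψ m = n := by
        apply Subtype.coe_injective
        show (↑(ψ m) : Set (List ℕ)) = ↑n
        rw [cψ m, hnm]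
      rw [hψm, hn] at this
      exact hmem this.symm
    · have := homφ.lab_eq n (fun hc => hn hc)
      rw [hm] at this
      exact this.symm
  · intro n m hnm i hi hi'
    have hm : φ n = m := by
      apply Subtype.coe_injective
      show (↑(φ n) : Set (List ℕ)) = ↑m
      rw [cφ n, hnm]
    subst hm
    have hn : g.tg.lab n ∉ ({none} : Set (Option S.Sym)) := by
      intro hc
      replace hc : g.tg.lab n = none := hc
      have h1 : S.bot.ar (g.tg.lab n) = 0 := by rw [hc]; rfl
      omega
    have := homφ.suc_eq n hn i hi hi'
    calc (↑(g.tg.suc n ⟨i, hi⟩) : Set (List ℕ))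
        = ↑(φ (g.tg.suc n ⟨i, hi⟩)) := (cφ _).symm
      _ = ↑(h.tg.suc (φ n) ⟨i, hi'⟩) := by rw [this]
  · calc (↑g.tg.root : Set (List ℕ)) = ↑(φ g.tg.root) := (cφ _).symm
      _ = ↑h.tg.root := by rw [homφ.root_eq]

end CTG
namespace LQT

variable {S : Signature} (T : LQT S)

def cls (π : List ℕ) : Set (List ℕ) := {π' | T.rel π π'}

theorem cls_eq {π π' : List ℕ} (h : T.rel π π') : T.cls π = T.cls π' := by
  ext ρ
  exact ⟨fun hr => T.rel_trans _ _ _ (T.rel_symm _ _ h) hr,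
    fun hr => T.rel_trans _ _ _ h hr⟩

theorem rel_of_cls_eq {π π' : List ℕ} (hπ' : π' ∈ T.P)
    (h : T.cls π = T.cls π') : T.rel π π' := by
  have : π' ∈ T.cls π' := T.rel_refl π' hπ'
  rw [← h] at this
  exact this

theorem prefix_mem {π ρ : List ℕ} (h : π ∈ T.P) (hρ : ρ <+: π) : ρ ∈ T.P := by
  induction π using List.reverseRecOn generalizing ρ with
  | nil => rw [List.prefix_nil.mp hρ]; exact h
  | append_singleton π i ih =>
    rcases List.prefix_concat_iff.mp hρ with rfl | hρ'
    · exact h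
    · exact ih (T.reach_mem π i h) hρ'

theorem nil_mem : [] ∈ T.P := by
  obtain ⟨π, hπ⟩ := T.nonempty
  exact T.prefix_mem hπ (List.nil_prefix)

def nodes : Set (Set (List ℕ)) := {C | ∃ π, π ∈ T.P ∧ C = T.cls π}

noncomputable def rep (n : ↥T.nodes) : List ℕ := n.2.choose

theorem rep_mem (n : ↥T.nodes) : T.rep n ∈ T.P := n.2.choose_spec.1

theorem rep_cls (n : ↥T.nodes) : (n : Set (List ℕ)) = T.cls (T.rep n) :=
  n.2.choose_spec.2

theorem snoc_mem {π : List ℕ} {i : ℕ} (hπ : π ∈ T.P) (hi : i < S.ar (T.l π)) :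
    π ++ [i] ∈ T.P :=
  (T.rel_mem _ _ (T.congr_suc π π i (T.rel_refl π hπ) hi)).1

noncomputable def tg0 : TermGraph S ↥T.nodes where
  lab := fun n => T.l (T.rep n)
  suc := fun n i =>
    ⟨T.cls (T.rep n ++ [(i : ℕ)]),
      ⟨T.rep n ++ [(i : ℕ)], T.snoc_mem (T.rep_mem n) i.isLt, rfl⟩⟩
  root := ⟨T.cls [], ⟨[], T.nil_mem, rfl⟩⟩

theorem rel_rep {n : ↥T.nodes} {π : List ℕ} (h : (n : Set (List ℕ)) = T.cls π)
    (hπ : π ∈ T.P) : T.rel (T.rep n) π :=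
  T.rel_of_cls_eq hπ (by rw [← T.rep_cls n, h])

theorem lab_tg0 {n : ↥T.nodes} {π : List ℕ} (h : (n : Set (List ℕ)) = T.cls π)
    (hπ : π ∈ T.P) : T.tg0.lab n = T.l π :=
  T.congr_lab _ _ (T.rel_rep h hπ)

theorem suc_tg0 {n : ↥T.nodes} {π : List ℕ} (h : (n : Set (List ℕ)) = T.cls π)
    (hπ : π ∈ T.P) (i : Fin (S.ar (T.tg0.lab n))) :
    (↑(T.tg0.suc n i) : Set (List ℕ)) = T.cls (π ++ [(i : ℕ)]) := by
  show T.cls (T.rep n ++ [(i : ℕ)]) = T.cls (π ++ [(i : ℕ)])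
  exact T.cls_eq (T.congr_suc _ _ _ (T.rel_rep h hπ) i.isLt)

theorem isPos_tg0_of {π : List ℕ} (hπ : π ∈ T.P) :
    ∀ (n : ↥T.nodes), (n : Set (List ℕ)) = T.cls π → T.tg0.IsPos π n := by
  induction π using List.reverseRecOn with
  | nil =>
    intro n hn
    have : n = T.tg0.root := Subtype.ext hn
    rw [this]
    exact TermGraph.IsPos.root
  | append_singleton π i ih =>
    intro n hn
    have hπP : π ∈ T.P := T.reach_mem π i hπ
    set m : ↥T.nodes := ⟨T.cls π, ⟨π, hπP, rfl⟩⟩ with hm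
    have hpos : T.tg0.IsPos π m := ih hπP m rfl
    have hlab : T.tg0.lab m = T.l π := T.lab_tg0 rfl hπP
    have hi : i < S.ar (T.tg0.lab m) := by rw [hlab]; exact T.reach_ar π i hπ
    have hstep := hpos.step ⟨i, hi⟩
    have : T.tg0.suc m ⟨i, hi⟩ = n := by
      apply Subtype.ext
      rw [T.suc_tg0 rfl hπP ⟨i, hi⟩, hn]
    rwa [this] at hstep

theorem isPos_tg0 {π : List ℕ} {n : ↥T.nodes} :
    T.tg0.IsPos π n ↔ (π ∈ T.P ∧ (n : Set (List ℕ)) = T.cls π) := by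
  constructor
  · intro h
    induction h with
    | root => exact ⟨T.nil_mem, rfl⟩
    | @step π m hm i ih =>
      obtain ⟨hπ, hcls⟩ := ih
      have hlab : T.tg0.lab m = T.l π := T.lab_tg0 hcls hπ
      have hi : (i : ℕ) < S.ar (T.l π) := by rw [← hlab]; exact i.isLt
      exact ⟨T.snoc_mem hπ hi, T.suc_tg0 hcls hπ i⟩
  · rintro ⟨hπ, hn⟩
    exact T.isPos_tg0_of hπ n hn

noncomputable def toCTG : CTG S where
  nodes := T.nodes
  tg := T.tg0
  reach := fun n => ⟨T.rep n, T.isPos_tg0_of (T.rep_mem n) n (T.rep_cls n)⟩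
  canon := by
    intro n
    ext π
    rw [T.rep_cls n]
    constructor
    · intro h
      have hπ : π ∈ T.P := (T.rel_mem _ _ h).2
      show T.tg0.IsPos π n
      rw [T.isPos_tg0]
      exact ⟨hπ, by rw [T.rep_cls n]; exact T.cls_eq h⟩
    · intro h
      have := (T.isPos_tg0 (n := n)).mp h
      exact T.rel_rep this.2 this.1

theorem aliases_toCTG {π π' : List ℕ} :
    T.toCTG.Aliases π π' ↔ T.rel π π' := by
  constructor
  · rintro ⟨n, h1, h2⟩
    obtain ⟨p1, c1⟩ := (T.isPos_tg0).mp h1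
    obtain ⟨p2, c2⟩ := (T.isPos_tg0).mp h2
    exact T.rel_of_cls_eq p2 (by rw [← c1, c2])
  · intro h
    have h1 : π ∈ T.P := (T.rel_mem _ _ h).1
    have h2 : π' ∈ T.P := (T.rel_mem _ _ h).2
    refine ⟨⟨T.cls π, ⟨π, h1, rfl⟩⟩, (T.isPos_tg0).mpr ⟨h1, rfl⟩,
      (T.isPos_tg0).mpr ⟨h2, T.cls_eq h⟩⟩

theorem memLab_toCTG {π : List ℕ} {v : S.Sym} :
    T.toCTG.MemLab π v ↔ (π ∈ T.P ∧ T.l π = v) := by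
  constructor
  · rintro ⟨n, h1, h2⟩
    obtain ⟨p1, c1⟩ := (T.isPos_tg0).mp h1
    exact ⟨p1, by rw [← T.lab_tg0 c1 p1]; exact h2⟩
  · rintro ⟨h1, h2⟩
    exact ⟨⟨T.cls π, ⟨π, h1, rfl⟩⟩, (T.isPos_tg0).mpr ⟨h1, rfl⟩,
      by show T.tg0.lab _ = v; exact (T.lab_tg0 rfl h1).trans h2⟩

theorem acy_toCTG {π : List ℕ} :
    T.toCTG.tg.IsAcyclicPos π ↔
      ∀ ρ₁ ρ₂, ρ₁ <+: ρ₂ → ρ₂ <+: π → T.rel ρ₁ ρ₂ → ρ₁ = ρ₂ := by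
  constructor
  · intro h ρ₁ ρ₂ hp1 hp2 hrel
    have m1 : ρ₁ ∈ T.P := (T.rel_mem _ _ hrel).1
    refine h ρ₁ ρ₂ ⟨T.cls ρ₁, ⟨ρ₁, m1, rfl⟩⟩ hp1 hp2 ((T.isPos_tg0).mpr ⟨m1, rfl⟩) ?_
    exact (T.isPos_tg0).mpr ⟨(T.rel_mem _ _ hrel).2, T.cls_eq hrel⟩
  · intro h ρ₁ ρ₂ n hp1 hp2 q1 q2
    obtain ⟨m1, c1⟩ := (T.isPos_tg0).mp q1
    obtain ⟨m2, c2⟩ := (T.isPos_tg0).mp q2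
    exact h ρ₁ ρ₂ hp1 hp2 (T.rel_of_cls_eq m2 (by rw [← c1, c2]))

end LQT
namespace CTG

variable {S : Signature}

def botLQT (S : Signature) : LQT S.bot where
  P := {[]}
  nonempty := ⟨[], rfl⟩
  l := fun _ => none
  rel := fun π π' => π = [] ∧ π' = []
  rel_refl := fun π h => ⟨h, h⟩
  rel_symm := fun _ _ h => ⟨h.2, h.1⟩
  rel_trans := fun _ _ _ h h' => ⟨h.1, h'.2⟩
  rel_mem := fun _ _ h => ⟨h.1, h.2⟩
  reach_mem := fun π i h => absurd h (by simp)
  reach_ar := fun π i h => absurd h (by simp)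
  congr_lab := fun _ _ _ => rfl
  congr_suc := fun π π' i _ hi => absurd hi (by simp [Signature.bot])

noncomputable def botCTG (S : Signature) : CTG S.bot := (botLQT S).toCTG

theorem botCTG_unique_node (n : ↥(botCTG S).nodes) : n = (botCTG S).tg.root := by
  apply Subtype.ext
  obtain ⟨π, hπ, hc⟩ := n.2
  have : π = [] := hπ
  subst this
  exact hc

theorem botCTG_lab_root : (botCTG S).tg.lab (botCTG S).tg.root = none := rfl

theorem botCTG_le (g : CTG S.bot) : (botCTG S).LeR g := by
  refine PosLe.leR ⟨?_, ?_, ?_⟩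
  · intro π π' hal
    have h := ((botLQT S).aliases_toCTG).mp hal
    obtain ⟨h1, h2⟩ := h
    subst h1; subst h2
    exact aliases_refl (TermGraph.IsPos.root)
  · intro π f hm
    have := ((botLQT S).memLab_toCTG).mp hm
    exact absurd this.2 (by simp [botLQT])
  · intro π f hm
    have := ((botLQT S).memLab_toCTG).mp hm
    exact absurd this.2 (by simp [botLQT])

end CTG
namespace CTG

variable {S : Signature}

/-- The aliasing relation generated by a family of canonical partial term
graphs: the least congruence containing all member aliasing relations. -/
inductive Rel (A : Set (CTG S.bot)) : List ℕ → List ℕ → Prop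
  | base {g : CTG S.bot} {π π' : List ℕ} : g ∈ A → g.Aliases π π' → Rel A π π'
  | symm {π π' : List ℕ} : Rel A π π' → Rel A π' π
  | trans {π π' π'' : List ℕ} : Rel A π π' → Rel A π' π'' → Rel A π π''
  | suc {g : CTG S.bot} {π π' χ : List ℕ} {f : S.Sym} {i : ℕ} :
      g ∈ A → Rel A π π' → Rel A π χ → g.MemLab χ (some f) → i < S.ar f →
      Rel A (π ++ [i]) (π' ++ [i])

/-- Acyclicity of a position with respect to the generated aliasing. -/
def RelAcy (A : Set (CTG S.bot)) (π : List ℕ) : Prop :=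
  ∀ ρ₁ ρ₂, ρ₁ <+: ρ₂ → ρ₂ <+: π → Rel A ρ₁ ρ₂ → ρ₁ = ρ₂

theorem Rel.left {A : Set (CTG S.bot)} {π π' : List ℕ} (h : Rel A π π') :
    Rel A π π := h.trans h.symm

theorem rel_prefix {A : Set (CTG S.bot)} {π π' : List ℕ} (h : Rel A π π') :
    ∀ ρ, (ρ <+: π ∨ ρ <+: π') → Rel A ρ ρ := by
  induction h with
  | @base g π π' hg hal =>
    rintro ρ (hρ | hρ)
    · obtain ⟨n, h1, _⟩ := hal
      obtain ⟨m, hm⟩ := TermGraph.isPos_prefix h1 hρ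
      exact Rel.base hg (aliases_refl hm)
    · obtain ⟨n, _, h2⟩ := hal
      obtain ⟨m, hm⟩ := TermGraph.isPos_prefix h2 hρ
      exact Rel.base hg (aliases_refl hm)
  | symm h ih => exact fun ρ hρ => ih ρ hρ.symm
  | trans h h' ih ih' =>
    rintro ρ (hρ | hρ)
    · exact ih ρ (Or.inl hρ)
    · exact ih' ρ (Or.inr hρ)
  | @suc g π π' χ f i hg h hχ hm hi ih ihχ =>
    rintro ρ (hρ | hρ)
    · rcases List.prefix_concat_iff.mp hρ with rfl | hρ'
      · exact Rel.suc hg h.left hχ hm hi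
      · exact ih ρ (Or.inl hρ')
    · rcases List.prefix_concat_iff.mp hρ with rfl | hρ'
      · exact Rel.suc hg (h.symm.trans h) (h.symm.trans hχ) hm hi
      · exact ih ρ (Or.inr hρ')

theorem rel_snoc {A : Set (CTG S.bot)} {α β : List ℕ} (h : Rel A α β) :
    ∀ π i, (α = π ++ [i] ∨ β = π ++ [i]) →
    ∃ (f : S.Sym) (g : CTG S.bot) (χ : List ℕ),
      g ∈ A ∧ Rel A π χ ∧ g.MemLab χ (some f) ∧ i < S.ar f := by
  induction h with
  | @base g π₀ π₀' hg hal =>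
    have main : ∀ (γ : List ℕ), (∃ n, g.tg.IsPos γ n) → ∀ π i, γ = π ++ [i] →
        ∃ (f : S.Sym) (g : CTG S.bot) (χ : List ℕ),
          g ∈ A ∧ Rel A π χ ∧ g.MemLab χ (some f) ∧ i < S.ar f := by
      rintro γ ⟨n, hn⟩ π i rfl
      obtain ⟨m, hi, hm, rfl⟩ := TermGraph.isPos_snoc hn
      match hl : g.tg.lab m with
      | none =>
        rw [hl] at hi
        exact absurd hi (by simp [Signature.bot])
      | some f =>
        rw [hl] at hi
        exact ⟨f, g, π, hg, Rel.base hg (aliases_refl hm), ⟨m, hm, hl⟩, hi⟩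
    rintro π i (rfl | rfl)
    · exact main _ ⟨hal.choose, hal.choose_spec.1⟩ π i rfl
    · exact main _ ⟨hal.choose, hal.choose_spec.2⟩ π i rfl
  | symm h ih => exact fun π i hπ => ih π i hπ.symm
  | trans h h' ih ih' =>
    rintro π i (hπ | hπ)
    · exact ih π i (Or.inl hπ)
    · exact ih' π i (Or.inr hπ)
  | @suc g π₀ π₀' χ f i₀ hg h hχ hm hi ih ihχ =>
    rintro π i (hπ | hπ)
    · obtain ⟨rfl, rfl⟩ : π₀ = π ∧ i₀ = i := by
        rw [← List.concat_eq_append, ← List.concat_eq_append, List.concat_inj] at hπ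
        exact hπ
      exact ⟨f, g, χ, hg, hχ, hm, hi⟩
    · obtain ⟨rfl, rfl⟩ : π₀' = π ∧ i₀ = i := by
        rw [← List.concat_eq_append, ← List.concat_eq_append, List.concat_inj] at hπ
        exact hπ
      exact ⟨f, g, χ, hg, h.symm.trans hχ, hm, hi⟩

/-- Coherence conditions on a family ensuring that the generated aliasing
yields its least upper bound. -/
structure GoodFamily (A : Set (CTG S.bot)) : Prop where
  ne : A.Nonempty
  g1 : ∀ {π π' : List ℕ} {g g' : CTG S.bot} {f f' : S.Sym}, g ∈ A → g' ∈ A →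
    Rel A π π' → g.MemLab π (some f) → g'.MemLab π' (some f') → f = f'
  g2 : ∀ {g : CTG S.bot} {π π'' : List ℕ} {f : S.Sym}, g ∈ A →
    g.MemLab π (some f) → Rel A π π'' → RelAcy A π'' →
    g.Aliases π'' π ∧ g.tg.IsAcyclicPos π''
  g3 : ∀ {g : CTG S.bot} {π π' : List ℕ} {f : S.Sym}, g ∈ A →
    g.MemLab π (some f) → g.Aliases π' π → g.tg.IsAcyclicPos π' → RelAcy A π'

/-- The (unique) non-`⊥` label carried by the `Rel`-class of a position. -/
def Wit (A : Set (CTG S.bot)) (π : List ℕ) (f : S.Sym) : Prop :=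
  ∃ g ∈ A, ∃ χ, Rel A π χ ∧ g.MemLab χ (some f)

open Classical in
noncomputable def labF (A : Set (CTG S.bot)) (π : List ℕ) : Option S.Sym :=
  if h : ∃ f, Wit A π f then some h.choose else none

theorem wit_unique {A : Set (CTG S.bot)} (G : GoodFamily A) {π : List ℕ}
    {f f' : S.Sym} (h : Wit A π f) (h' : Wit A π f') : f = f' := by
  obtain ⟨g, hg, χ, hr, hm⟩ := h
  obtain ⟨g', hg', χ', hr', hm'⟩ := h'
  exact G.g1 hg hg' (hr.symm.trans hr') hm hm'

theorem labF_eq_some {A : Set (CTG S.bot)} (G : GoodFamily A) {π : List ℕ}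
    {f : S.Sym} : labF A π = some f ↔ Wit A π f := by
  unfold labF
  split
  · rename_i h
    simp only [Option.some_inj]
    exact ⟨fun he => he ▸ h.choose_spec, fun hw => wit_unique G h.choose_spec hw⟩
  · rename_i h
    simp only [false_iff, reduceCtorEq]
    exact fun hw => h ⟨f, hw⟩

theorem wit_congr {A : Set (CTG S.bot)} {π π' : List ℕ} (h : Rel A π π')
    {f : S.Sym} : Wit A π f ↔ Wit A π' f := by
  constructor
  · rintro ⟨g, hg, χ, hr, hm⟩
    exact ⟨g, hg, χ, h.symm.trans hr, hm⟩
  · rintro ⟨g, hg, χ, hr, hm⟩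
    exact ⟨g, hg, χ, h.trans hr, hm⟩

theorem labF_congr {A : Set (CTG S.bot)} (G : GoodFamily A) {π π' : List ℕ}
    (h : Rel A π π') : labF A π = labF A π' := by
  unfold labF
  have hiff : (∃ f, Wit A π f) ↔ (∃ f, Wit A π' f) := exists_congr fun f => wit_congr h
  split <;> split <;> rename_i h1 h2
  · exact congrArg some (wit_unique G h1.choose_spec ((wit_congr h).mpr h2.choose_spec))
  · exact absurd (hiff.mp h1) h2
  · exact absurd (hiff.mpr h2) h1
  · rfl

noncomputable def lubLQT (A : Set (CTG S.bot)) (G : GoodFamily A) : LQT S.bot where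
  P := {π | Rel A π π}
  nonempty := by
    obtain ⟨g, hg⟩ := G.ne
    exact ⟨[], Rel.base hg (aliases_refl TermGraph.IsPos.root)⟩
  l := labF A
  rel := Rel A
  rel_refl := fun π h => h
  rel_symm := fun _ _ h => h.symm
  rel_trans := fun _ _ _ h h' => h.trans h'
  rel_mem := fun _ _ h => ⟨h.left, h.symm.left⟩
  reach_mem := fun π i h => rel_prefix h π (Or.inl ⟨[i], rfl⟩)
  reach_ar := by
    intro π i h
    obtain ⟨f, g, χ, hg, hr, hm, hi⟩ := rel_snoc h π i (Or.inl rfl)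
    have : labF A π = some f := (labF_eq_some G).mpr ⟨g, hg, χ, hr, hm⟩
    rw [this]
    exact hi
  congr_lab := fun _ _ h => labF_congr G h
  congr_suc := by
    intro π π' i h hi
    match hl : labF A π with
    | none => rw [hl] at hi; exact absurd hi (by simp [Signature.bot])
    | some f =>
      rw [hl] at hi
      obtain ⟨g, hg, χ, hr, hm⟩ := (labF_eq_some G).mp hl
      exact Rel.suc hg h hr hm hi

end CTG
namespace CTG

variable {S : Signature}

theorem rel_sub {A : Set (CTG S.bot)} {w : CTG S.bot}
    (hw : ∀ g ∈ A, PosLe g w) {α β : List ℕ} (h : Rel A α β) :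
    w.Aliases α β := by
  induction h with
  | base hg hal => exact (hw _ hg).al _ _ hal
  | symm h ih => exact aliases_symm ih
  | trans h h' ih ih' => exact aliases_trans ih ih'
  | @suc g π π' χ f i hg h hχ hm hi ih ihχ =>
    obtain ⟨m, hm1, hm2⟩ := (hw g hg).lab χ f hm
    have hπm : w.tg.IsPos π m := aliases_isPos (aliases_symm ihχ) hm1
    have hi' : i < S.bot.ar (w.tg.lab m) := by rw [hm2]; exact hi
    exact aliases_step ih hπm hi'

theorem goodFamily_isLub (A : Set (CTG S.bot)) (G : GoodFamily A) :
    IsLubR A (lubLQT A G).toCTG := by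
  set T := lubLQT A G with hT
  set v := T.toCTG with hv
  have alv : ∀ π π', v.Aliases π π' ↔ Rel A π π' := fun _ _ => T.aliases_toCTG
  have acyv : ∀ π, v.tg.IsAcyclicPos π ↔ RelAcy A π := fun π => T.acy_toCTG
  have labv : ∀ π fo, v.MemLab π fo ↔ (Rel A π π ∧ labF A π = fo) :=
    fun _ _ => T.memLab_toCTG
  have ub : ∀ g ∈ A, PosLe g v := by
    intro g hg
    refine ⟨?_, ?_, ?_⟩
    · intro π π' hal
      exact (alv π π').mpr (Rel.base hg hal)
    · intro π f hm
      have hr : Rel A π π := Rel.base hg (aliases_refl hm.choose_spec.1)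
      exact (labv π (some f)).mpr ⟨hr, (labF_eq_some G).mpr ⟨g, hg, π, hr, hm⟩⟩
    · intro π f hm π'
      constructor
      · rintro ⟨hal, hacy⟩
        refine ⟨(alv π' π).mpr (Rel.base hg hal), (acyv π').mpr ?_⟩
        exact G.g3 hg hm hal hacy
      · rintro ⟨hal, hacy⟩
        have hrel : Rel A π π' := ((alv π' π).mp hal).symm
        exact G.g2 hg hm hrel ((acyv π').mp hacy)
  have lst : ∀ w, IsUB A w → PosLe v w := by
    intro w hw
    have pw : ∀ g ∈ A, PosLe g w := fun g hg => (hw g hg).posLe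
    refine ⟨?_, ?_, ?_⟩
    · intro π π' hal
      exact rel_sub pw ((alv π π').mp hal)
    · intro π f hm
      obtain ⟨hr, hl⟩ := (labv π (some f)).mp hm
      obtain ⟨g, hg, χ, hrel, hmg⟩ := (labF_eq_some G).mp hl
      obtain ⟨m, q1, q2⟩ := (pw g hg).lab χ f hmg
      exact ⟨m, aliases_isPos (aliases_symm (rel_sub pw hrel)) q1, q2⟩
    · intro π f hm π'
      obtain ⟨hr, hl⟩ := (labv π (some f)).mp hm
      obtain ⟨g, hg, χ, hrel, hmg⟩ := (labF_eq_some G).mp hl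
      have i1 : (g.Aliases π' χ ∧ g.tg.IsAcyclicPos π') ↔
          (v.Aliases π' χ ∧ v.tg.IsAcyclicPos π') := (ub g hg).rig χ f hmg π'
      have i2 : (g.Aliases π' χ ∧ g.tg.IsAcyclicPos π') ↔
          (w.Aliases π' χ ∧ w.tg.IsAcyclicPos π') := (pw g hg).rig χ f hmg π'
      have e1 : v.Aliases π' π ↔ v.Aliases π' χ := by
        constructor
        · intro h; exact aliases_trans h ((alv π χ).mpr hrel)
        · intro h; exact aliases_trans h (aliases_symm ((alv π χ).mpr hrel))
      have e2 : w.Aliases π' π ↔ w.Aliases π' χ := by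
        have hwπχ : w.Aliases π χ := rel_sub pw hrel
        constructor
        · intro h; exact aliases_trans h hwπχ
        · intro h; exact aliases_trans h (aliases_symm hwπχ)
      rw [and_congr_left' e1, and_congr_left' e2] at *
      rw [← i1, i2]
  exact ⟨fun g hg => (ub g hg).leR, fun w hw => (lst w hw).leR⟩

end CTG
namespace CTG

variable {S : Signature}

theorem acy_prefix {g : CTG S} {π ρ : List ℕ} (h : g.tg.IsAcyclicPos π)
    (hρ : ρ <+: π) : g.tg.IsAcyclicPos ρ :=
  fun ρ₁ ρ₂ n h1 h2 p1 p2 => h ρ₁ ρ₂ n h1 (h2.trans hρ) p1 p2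

theorem goodFamily_of_bounded {A : Set (CTG S.bot)} {u : CTG S.bot}
    (hne : A.Nonempty) (hu : ∀ g ∈ A, g.LeR u) : GoodFamily A := by
  have pu : ∀ g ∈ A, PosLe g u := fun g hg => (hu g hg).posLe
  have star : ∀ {α β : List ℕ}, Rel A α β → u.Aliases α β :=
    fun h => rel_sub pu h
  have dagger : ∀ (k : ℕ) (π'' : List ℕ), π''.length = k → Rel A π'' π'' →
      (∃ g ∈ A, ∃ χ f, Rel A π'' χ ∧ g.MemLab χ (some f)) → RelAcy A π'' →
      u.tg.IsAcyclicPos π'' := by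
    intro k
    induction k using Nat.strong_induction_on with
    | _ k ih =>
      intro π'' hlen hrel hwit hacy
      rcases List.eq_nil_or_concat π'' with rfl | ⟨τ, j, rfl⟩
      · intro ρ₁ ρ₂ n h1 h2 _ _
        rw [List.prefix_nil.mp h2, List.prefix_nil.mp (h1.trans h2)]
      · rw [List.concat_eq_append] at *
        obtain ⟨f₀, g₀, χ₀, hg₀, hr₀, hm₀, hi₀⟩ := rel_snoc hrel τ j (Or.inl rfl)
        have hτpre : τ <+: τ ++ [j] := ⟨[j], rfl⟩
        have hτrel : Rel A τ τ := rel_prefix hrel τ (Or.inl hτpre)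
        have hτacy : RelAcy A τ := fun ρ₁ ρ₂ h1 h2 hr =>
          hacy ρ₁ ρ₂ h1 (h2.trans hτpre) hr
        have hτlen : τ.length < k := by
          rw [← hlen]; simp
        have hτu : u.tg.IsAcyclicPos τ :=
          ih τ.length hτlen τ rfl hτrel ⟨g₀, hg₀, χ₀, f₀, hr₀, hm₀⟩ hτacy
        intro ρ₁ ρ₂ n h1 h2 p1 p2
        rcases List.prefix_concat_iff.mp h2 with rfl | hρ₂τ
        · -- ρ₂ is the whole position
          rcases List.prefix_concat_iff.mp h1 with rfl | hρ₁τ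
          · rfl
          · -- ρ₁ is a prefix of τ, aliased in u to the whole position
            obtain ⟨g'', hg'', χ'', f'', hr'', hm''⟩ := hwit
            have halu : u.Aliases (τ ++ [j]) χ'' := star hr''
            have hal1 : u.Aliases ρ₁ χ'' :=
              aliases_trans ⟨n, p1, p2⟩ halu
            have hacy1 : u.tg.IsAcyclicPos ρ₁ := acy_prefix hτu hρ₁τ
            have := ((pu g'' hg'').rig χ'' f'' hm'' ρ₁).mpr ⟨hal1, hacy1⟩
            have hrel1 : Rel A ρ₁ χ'' := Rel.base hg'' this.1
            have : Rel A ρ₁ (τ ++ [j]) := hrel1.trans hr''.symm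
            exact hacy ρ₁ (τ ++ [j]) h1 (List.prefix_refl _) this
        · -- both prefixes of τ
          exact hτu ρ₁ ρ₂ n h1 hρ₂τ p1 p2
  refine ⟨hne, ?_, ?_, ?_⟩
  · intro π π' g g' f f' hg hg' hrel hm hm'
    obtain ⟨m, q1, q2⟩ := (pu g hg).lab π f hm
    obtain ⟨m', q1', q2'⟩ := (pu g' hg').lab π' f' hm'
    have : u.tg.IsPos π' m := aliases_isPos (star hrel) q1
    cases TermGraph.isPos_unique this q1'
    rw [← Option.some_inj, ← q2, ← q2']
  · intro g π π'' f hg hm hrel hacy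
    have hwit : ∃ g' ∈ A, ∃ χ f', Rel A π'' χ ∧ g'.MemLab χ (some f') :=
      ⟨g, hg, π, f, hrel.symm, hm⟩
    have hru : u.tg.IsAcyclicPos π'' := dagger π''.length π'' rfl hrel.symm.left hwit hacy
    have halu : u.Aliases π'' π := star hrel.symm
    exact ((pu g hg).rig π f hm π'').mpr ⟨halu, hru⟩
  · intro g π π' f hg hm hal hacy
    intro ρ₁ ρ₂ h1 h2 hrel
    have hu' := ((pu g hg).rig π f hm π').mp ⟨hal, hacy⟩
    obtain ⟨m, q1, q2⟩ := star hrel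
    exact hu'.2 ρ₁ ρ₂ m h1 h2 q1 q2

theorem goodFamily_of_directed {D : Set (CTG S.bot)} (hd : DirectedR D) :
    GoodFamily D := by
  have join2 : ∀ g ∈ D, ∀ h ∈ D, ∃ k ∈ D, PosLe g k ∧ PosLe h k := by
    intro g hg h hh
    obtain ⟨k, hk, h1, h2⟩ := hd.2 g hg h hh
    exact ⟨k, hk, h1.posLe, h2.posLe⟩
  have join3 : ∀ g ∈ D, ∀ h ∈ D, ∀ g' ∈ D,
      ∃ k ∈ D, PosLe g k ∧ PosLe h k ∧ PosLe g' k := by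
    intro g hg h hh g' hg'
    obtain ⟨k₁, hk₁, p1, p2⟩ := join2 g hg h hh
    obtain ⟨k, hk, q1, q2⟩ := join2 k₁ hk₁ g' hg'
    exact ⟨k, hk, p1.trans q1, p2.trans q1, q2⟩
  have star : ∀ {α β : List ℕ}, Rel D α β → ∃ k ∈ D, k.Aliases α β := by
    intro α β h
    induction h with
    | base hg hal => exact ⟨_, hg, hal⟩
    | symm h ih =>
      obtain ⟨k, hk, hal⟩ := ih
      exact ⟨k, hk, aliases_symm hal⟩
    | trans h h' ih ih' =>
      obtain ⟨k₁, hk₁, hal₁⟩ := ih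
      obtain ⟨k₂, hk₂, hal₂⟩ := ih'
      obtain ⟨k, hk, p1, p2⟩ := join2 k₁ hk₁ k₂ hk₂
      exact ⟨k, hk, aliases_trans (p1.al _ _ hal₁) (p2.al _ _ hal₂)⟩
    | @suc g π π' χ f i hg h hχ hm hi ih ihχ =>
      obtain ⟨k₁, hk₁, hal₁⟩ := ih
      obtain ⟨k₂, hk₂, hal₂⟩ := ihχ
      obtain ⟨k, hk, p1, p2, p3⟩ := join3 k₁ hk₁ k₂ hk₂ g hg
      obtain ⟨m, q1, q2⟩ := p3.lab χ f hm
      have hπm : k.tg.IsPos π m := aliases_isPos (aliases_symm (p2.al _ _ hal₂)) q1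
      have hi' : i < S.bot.ar (k.tg.lab m) := by rw [q2]; exact hi
      exact ⟨k, hk, aliases_step (p1.al _ _ hal₁) hπm hi'⟩
  refine ⟨hd.1, ?_, ?_, ?_⟩
  · intro π π' g g' f f' hg hg' hrel hm hm'
    obtain ⟨k₀, hk₀, hal₀⟩ := star hrel
    obtain ⟨k, hk, p1, p2, p3⟩ := join3 k₀ hk₀ g hg g' hg'
    obtain ⟨m, q1, q2⟩ := p2.lab π f hm
    obtain ⟨m', q1', q2'⟩ := p3.lab π' f' hm'
    have : k.tg.IsPos π' m := aliases_isPos (p1.al _ _ hal₀) q1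
    cases TermGraph.isPos_unique this q1'
    rw [← Option.some_inj, ← q2, ← q2']
  · intro g π π'' f hg hm hrel hacy
    obtain ⟨k₀, hk₀, hal₀⟩ := star hrel
    obtain ⟨k, hk, p1, p2⟩ := join2 k₀ hk₀ g hg
    have halk : k.Aliases π π'' := p1.al _ _ hal₀
    have hacyk : k.tg.IsAcyclicPos π'' := by
      intro ρ₁ ρ₂ n h1 h2 q1 q2
      exact hacy ρ₁ ρ₂ h1 h2 (Rel.base hk ⟨n, q1, q2⟩)
    exact ((p2.rig π f hm π'')).mpr ⟨aliases_symm halk, hacyk⟩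
  · intro g π π' f hg hm hal hacy
    intro ρ₁ ρ₂ h1 h2 hrel
    obtain ⟨k₀, hk₀, hal₀⟩ := star hrel
    obtain ⟨k, hk, p1, p2⟩ := join2 k₀ hk₀ g hg
    have hk' := ((p2.rig π f hm π')).mp ⟨hal, hacy⟩
    obtain ⟨m, q1, q2⟩ := p1.al _ _ hal₀
    exact hk'.2 ρ₁ ρ₂ m h1 h2 q1 q2

end CTG
/-- The set of canonical partial term graphs over a signature
`Σ`, partially ordered by the rigid partial order `≤⊥r`, forms a complete
semilattice: it is a cpo (with least element the one-node term graph `⊥`) in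
which every non-empty subset has a greatest lower bound. -/
theorem rigid_order_complete_semilattice (S : Signature) :
    (∀ g : CTG S.bot, CTG.LeR g g) ∧
    (∀ g h k : CTG S.bot, CTG.LeR g h → CTG.LeR h k → CTG.LeR g k) ∧
    (∀ g h : CTG S.bot, CTG.LeR g h → CTG.LeR h g → g = h) ∧
    (∃ bot : CTG S.bot, (∀ n : ↥bot.nodes, n = bot.tg.root) ∧
        bot.tg.lab bot.tg.root = none ∧ ∀ g : CTG S.bot, CTG.LeR bot g) ∧
    (∀ D : Set (CTG S.bot), CTG.DirectedR D → ∃ u, CTG.IsLubR D u) ∧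
    (∀ B : Set (CTG S.bot), B.Nonempty → ∃ l, CTG.IsGlbR B l) := by
  refine ⟨fun g => CTG.leR_refl g, fun g h k a b => CTG.leR_trans a b,
    fun g h a b => CTG.leR_antisymm a b,
    ⟨CTG.botCTG S, CTG.botCTG_unique_node, CTG.botCTG_lab_root, CTG.botCTG_le⟩,
    ?_, ?_⟩
  · intro D hD
    exact ⟨_, CTG.goodFamily_isLub D (CTG.goodFamily_of_directed hD)⟩
  · intro B hB
    obtain ⟨u, hu⟩ := hB
    set A := {l : CTG S.bot | CTG.IsLB B l} with hA'
    have hA : ∀ g ∈ A, g.LeR u := fun g hg => hg u hu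
    have hne : A.Nonempty := ⟨CTG.botCTG S, fun b _ => CTG.botCTG_le b⟩
    have G := CTG.goodFamily_of_bounded hne hA
    have hlub := CTG.goodFamily_isLub A G
    refine ⟨(CTG.lubLQT A G).toCTG, ?_, ?_⟩
    · intro b hb
      exact hlub.2 b (fun l hl => hl b hb)
    · intro m hm
      exact hlub.1 m hm

end TGR
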